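/- Let Π be a proper plane in P and k₁, k₂, k₃ the sides of a proper triangle contained in Π. Then for every point a ∈ Π (proper or improper), there is a proper line through a that intersects two of the sides k₁, k₂, k₃ in two distinct proper points. In particular, proper planes are definable in terms of the complement of W in P. -/

import Mathlib

/-- A projective space of dimension at least 3, given by its point set `S` and its
set of lines: any two points lie on a unique line, the Veblen (Pasch) axiom holds,
and there exist two disjoint lines (dimension ≥ 3). -/
structure ProjSpace (S : Type*) where
  L : Set (Set S)
  two_points : ∀ k ∈ L, ∃ a ∈ k, ∃ b ∈ k, a ≠ b
  unique_meet : ∀ k ∈ L, ∀ l ∈ L, k ≠ l → (k ∩ l).Subsingleton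
  join : ∀ a b : S, a ≠ b → ∃ k ∈ L, a ∈ k ∧ b ∈ k
  veblen : ∀ l₁ ∈ L, ∀ l₂ ∈ L, ∀ l₃ ∈ L, ∀ l₄ ∈ L, ∀ p a b c d : S,
    l₁ ≠ l₂ → p ≠ a → p ≠ b → p ≠ c → p ≠ d →
    p ∈ l₁ → a ∈ l₁ → c ∈ l₁ → p ∈ l₂ → b ∈ l₂ → d ∈ l₂ →
    a ∈ l₃ → b ∈ l₃ → c ∈ l₄ → d ∈ l₄ → (l₃ ∩ l₄).Nonempty
  dim3 : ∃ k ∈ L, ∃ l ∈ L, k ∩ l = ∅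

namespace ProjSpace

variable {S : Type*}

/-- A subspace: any line through two of its points is contained in it. -/
def IsSubspace (P : ProjSpace S) (X : Set S) : Prop :=
  ∀ k ∈ P.L, ∀ a ∈ k, ∀ b ∈ k, a ≠ b → a ∈ X → b ∈ X → k ⊆ X

/-- The subspace spanned by a point set. -/
def span (P : ProjSpace S) (X : Set S) : Set S :=
  ⋂₀ {Y | P.IsSubspace Y ∧ X ⊆ Y}

/-- A plane: the span of a line together with a point outside it. -/
def IsPlane (P : ProjSpace S) (Pl : Set S) : Prop :=
  ∃ k ∈ P.L, ∃ a, a ∉ k ∧ Pl = P.span (insert a k)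

/-- `HasIndex P W lam`: some line has exactly `lam` points in `W` and every line not
contained in `W` has at most `lam` points in `W`. -/
def HasIndex (P : ProjSpace S) (W : Set S) (lam : ℕ) : Prop :=
  (∃ k ∈ P.L, (k ∩ W).encard = (lam : ℕ∞)) ∧
    ∀ k ∈ P.L, ¬ k ⊆ W → (k ∩ W).encard ≤ (lam : ℕ∞)

/-- Three lines form a triangle: pairwise distinct, pairwise intersecting,
not concurrent. -/
def LineTriangle (P : ProjSpace S) (k₁ k₂ k₃ : Set S) : Prop :=
  k₁ ∈ P.L ∧ k₂ ∈ P.L ∧ k₃ ∈ P.L ∧ k₁ ≠ k₂ ∧ k₁ ≠ k₃ ∧ k₂ ≠ k₃ ∧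
    (k₁ ∩ k₂).Nonempty ∧ (k₁ ∩ k₃).Nonempty ∧ (k₂ ∩ k₃).Nonempty ∧
    ¬ (k₁ ∩ k₂ ∩ k₃).Nonempty

/-- Parallelism w.r.t. the horizon `W`: the lines meet, and only inside `W`. -/
def Par (W : Set S) (k₁ k₂ : Set S) : Prop :=
  (k₁ ∩ k₂).Nonempty ∧ k₁ ∩ k₂ ⊆ W

end ProjSpace

namespace ProjSpace

variable {S : Type*}

/-- uniqueness of the line through two points -/
theorem line_eq (P : ProjSpace S) {l m : Set S} (hl : l ∈ P.L) (hm : m ∈ P.L)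
    {x y : S} (hxy : x ≠ y) (hxl : x ∈ l) (hyl : y ∈ l) (hxm : x ∈ m) (hym : y ∈ m) :
    l = m := by
  by_contra h
  exact hxy (P.unique_meet l hl m hm h ⟨hxl, hxm⟩ ⟨hyl, hym⟩)

theorem span_isSubspace (P : ProjSpace S) (X : Set S) : P.IsSubspace (P.span X) := by
  intro k hk a ha b hb hab haX hbX z hz
  intro Y hY
  exact hY.1 k hk a ha b hb hab (haX Y hY) (hbX Y hY) hz

theorem span_le (P : ProjSpace S) {X Y : Set S} (hY : P.IsSubspace Y) (hXY : X ⊆ Y) :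
    P.span X ⊆ Y :=
  Set.sInter_subset_of_mem ⟨hY, hXY⟩

/-- The cone over a line `k` with apex `b`. -/
def Cone (P : ProjSpace S) (b : S) (k : Set S) : Set S :=
  {y | y = b ∨ ∃ m ∈ P.L, b ∈ m ∧ y ∈ m ∧ (m ∩ k).Nonempty}

theorem subset_cone (P : ProjSpace S) {b : S} {k : Set S} (hbk : b ∉ k) :
    insert b k ⊆ P.Cone b k := by
  rintro y (rfl | hy)
  · exact Or.inl rfl
  · obtain ⟨m, hm, hbm, hym⟩ := P.join b y (fun h => hbk (h ▸ hy))
    exact Or.inr ⟨m, hm, hbm, hym, ⟨y, hym, hy⟩⟩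

/-- A line with two points in the cone and not through the apex meets `k`. -/
theorem cone_line_meets (P : ProjSpace S) {b : S} {k : Set S} (hk : k ∈ P.L) (hbk : b ∉ k)
    {m : Set S} (hm : m ∈ P.L) (hbm : b ∉ m) {y₁ y₂ : S} (h12 : y₁ ≠ y₂)
    (hy₁ : y₁ ∈ m) (hy₂ : y₂ ∈ m) (hc₁ : y₁ ∈ P.Cone b k) (hc₂ : y₂ ∈ P.Cone b k) :
    (m ∩ k).Nonempty := by
  obtain ⟨m₁, hm₁, hbm₁, hy₁m₁, x₁, hx₁⟩ := hc₁.resolve_left (fun h => hbm (h ▸ hy₁))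
  obtain ⟨m₂, hm₂, hbm₂, hy₂m₂, x₂, hx₂⟩ := hc₂.resolve_left (fun h => hbm (h ▸ hy₂))
  have hne : m₁ ≠ m₂ := by
    rintro rfl
    exact hbm ((P.line_eq hm₁ hm h12 hy₁m₁ hy₂m₂ hy₁ hy₂) ▸ hbm₁)
  exact P.veblen m₁ hm₁ m₂ hm₂ m hm k hk b y₁ y₂ x₁ x₂ hne
    (fun h => hbm (h ▸ hy₁)) (fun h => hbm (h ▸ hy₂))
    (fun h => hbk (h ▸ hx₁.2)) (fun h => hbk (h ▸ hx₂.2))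
    hbm₁ hy₁m₁ hx₁.1 hbm₂ hy₂m₂ hx₂.1 hy₁ hy₂ hx₁.2 hx₂.2

theorem cone_isSubspace (P : ProjSpace S) {b : S} {k : Set S} (hk : k ∈ P.L) (hbk : b ∉ k) :
    P.IsSubspace (P.Cone b k) := by
  intro m hm y₁ hy₁ y₂ hy₂ h12 hc₁ hc₂ z hz
  by_cases hbm : b ∈ m
  · -- the line goes through the apex
    rcases eq_or_ne y₁ b with rfl | hy₁b
    · -- then use y₂
      obtain ⟨m₂, hm₂, hbm₂, hy₂m₂, hmeet⟩ := hc₂.resolve_left (Ne.symm h12)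
      have : m = m₂ := P.line_eq hm hm₂ (Ne.symm h12) hy₂ hy₁ hy₂m₂ hbm₂
      exact Or.inr ⟨m, hm, hbm, hz, this ▸ hmeet⟩
    · obtain ⟨m₁, hm₁, hbm₁, hy₁m₁, hmeet⟩ := hc₁.resolve_left hy₁b
      have : m = m₁ := P.line_eq hm hm₁ (Ne.symm hy₁b) hbm hy₁ hbm₁ hy₁m₁
      exact Or.inr ⟨m, hm, hbm, hz, this ▸ hmeet⟩
  · -- apex not on the line
    by_cases hmk : m = k
    · subst hmk
      obtain ⟨mm, hmm, h1, h2⟩ := P.join b z (fun h => hbm (h ▸ hz))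
      exact Or.inr ⟨mm, hmm, h1, h2, ⟨z, h2, hz⟩⟩
    obtain ⟨x₀, hx₀m, hx₀k⟩ := P.cone_line_meets hk hbk hm hbm h12 hy₁ hy₂ hc₁ hc₂
    rcases eq_or_ne z b with rfl | hzb
    · exact Or.inl rfl
    rcases eq_or_ne z x₀ with rfl | hzx₀
    · obtain ⟨mm, hmm, h1, h2⟩ := P.join b z (Ne.symm hzb)
      exact Or.inr ⟨mm, hmm, h1, h2, ⟨z, h2, hx₀k⟩⟩
    rcases eq_or_ne z y₁ with rfl | hzy₁
    · exact hc₁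
    rcases eq_or_ne z y₂ with rfl | hzy₂
    · exact hc₂
    -- pick y ∈ {y₁, y₂} with y ≠ x₀
    obtain ⟨y, hym, hyc, hyz, hyx₀⟩ :
        ∃ y, y ∈ m ∧ y ∈ P.Cone b k ∧ z ≠ y ∧ y ≠ x₀ := by
      rcases eq_or_ne y₁ x₀ with rfl | h
      · exact ⟨y₂, hy₂, hc₂, hzy₂, fun h => h12 h.symm⟩
      · exact ⟨y₁, hy₁, hc₁, hzy₁, h⟩
    have hyb : y ≠ b := fun h => hbm (h ▸ hym)
    have hyk : y ∉ k := by
      intro hyk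
      exact hyx₀ (P.unique_meet m hm k hk hmk ⟨hym, hyk⟩ ⟨hx₀m, hx₀k⟩)
    obtain ⟨m₁, hm₁, hbm₁, hym₁, x₁, hx₁⟩ := (hyc).resolve_left hyb
    obtain ⟨l₃, hl₃, hbl₃, hzl₃⟩ := P.join b z (Ne.symm hzb)
    have hmm₁ : m₁ ≠ m := fun h => hbm (h ▸ hbm₁)
    have hmeet : (l₃ ∩ k).Nonempty :=
      P.veblen m₁ hm₁ m hm l₃ hl₃ k hk y b z x₁ x₀ hmm₁
        hyb (fun h => hyz h.symm) (fun h => hyk (h ▸ hx₁.2))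
        (fun h => hyk (h ▸ hx₀k))
        hym₁ hbm₁ hx₁.1 hym hz hx₀m hbl₃ hzl₃ hx₁.2 hx₀k
    exact Or.inr ⟨l₃, hl₃, hbl₃, hzl₃, hmeet⟩

theorem apex_line_meets_base (P : ProjSpace S) {b : S} {k : Set S} (hk : k ∈ P.L) (hbk : b ∉ k)
    {l : Set S} (hl : l ∈ P.L) (hbl : b ∈ l) (hlc : l ⊆ P.Cone b k) : (l ∩ k).Nonempty := by
  obtain ⟨u, hu, v, hv, huv⟩ := P.two_points l hl
  obtain ⟨y, hy, hyb⟩ : ∃ y, y ∈ l ∧ y ≠ b := by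
    rcases eq_or_ne u b with rfl | h
    · exact ⟨v, hv, fun h => huv h.symm⟩
    · exact ⟨u, hu, h⟩
  obtain ⟨m', hm', hbm', hym', hmeet⟩ := (hlc hy).resolve_left hyb
  have : m' = l := P.line_eq hm' hl hyb.symm hbm' hym' hbl hy
  exact this ▸ hmeet

theorem meet_apex (P : ProjSpace S) {b : S} {k : Set S} (hk : k ∈ P.L) (hbk : b ∉ k)
    {l m : Set S} (hl : l ∈ P.L) (hbl : b ∈ l) (hlc : l ⊆ P.Cone b k)
    (hm : m ∈ P.L) (hbm : b ∉ m) (hmc : m ⊆ P.Cone b k) : (l ∩ m).Nonempty := by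
  obtain ⟨xl, hxll, hxlk⟩ := P.apex_line_meets_base hk hbk hl hbl hlc
  obtain ⟨u, hu, v, hv, huv⟩ := P.two_points m hm
  obtain ⟨xm, hxmm, hxmk⟩ :=
    P.cone_line_meets hk hbk hm hbm huv hu hv (hmc hu) (hmc hv)
  rcases eq_or_ne xl xm with rfl | hxx
  · exact ⟨xl, hxll, hxmm⟩
  by_cases hmk : m = k
  · exact ⟨xl, hxll, hmk ▸ hxlk⟩
  obtain ⟨ym, hymm, hymk⟩ : ∃ y, y ∈ m ∧ y ∉ k := by
    by_contra h
    push_neg at h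
    exact huv (P.unique_meet m hm k hk hmk ⟨hu, h u hu⟩ ⟨hv, h v hv⟩)
  have hymb : ym ≠ b := fun h => hbm (h ▸ hymm)
  obtain ⟨m₂, hm₂, hbm₂, hymm₂, x₂, hx₂m₂, hx₂k⟩ := (hmc hymm).resolve_left hymb
  rcases eq_or_ne x₂ xl with rfl | hx₂xl
  · have hbx : b ≠ x₂ := fun h => hbk (h ▸ hx₂k)
    have : m₂ = l := P.line_eq hm₂ hl hbx hbm₂ hx₂m₂ hbl hxll
    exact ⟨ym, this ▸ hymm₂, hymm⟩
  have hx₂xm : x₂ ≠ xm := by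
    rintro rfl
    have hymxm : ym ≠ x₂ := fun h => hymk (h ▸ hx₂k)
    have : m₂ = m := P.line_eq hm₂ hm hymxm hymm₂ hx₂m₂ hymm hxmm
    exact hbm (this ▸ hbm₂)
  have hmeet : (m ∩ l).Nonempty :=
    P.veblen m₂ hm₂ k hk m hm l hl x₂ ym xm b xl
      (fun h => hbk (h ▸ hbm₂)) (fun h => hymk (h.symm ▸ hx₂k)) hx₂xm
      (fun h => hbk (h.symm ▸ hx₂k)) hx₂xl
      hx₂m₂ hymm₂ hbm₂ hx₂k hxmk hxlk hymm hxmm hbl hxll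
  exact ⟨hmeet.choose, hmeet.choose_spec.2, hmeet.choose_spec.1⟩

theorem cone_lines_meet (P : ProjSpace S) {b : S} {k : Set S} (hk : k ∈ P.L) (hbk : b ∉ k)
    (hbig : ∀ m ∈ P.L, (3 : ℕ∞) ≤ m.encard)
    {l m : Set S} (hl : l ∈ P.L) (hm : m ∈ P.L)
    (hlc : l ⊆ P.Cone b k) (hmc : m ⊆ P.Cone b k) : (l ∩ m).Nonempty := by
  by_cases hbl : b ∈ l
  · by_cases hbm : b ∈ m
    · exact ⟨b, hbl, hbm⟩
    · exact P.meet_apex hk hbk hl hbl hlc hm hbm hmc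
  by_cases hbm : b ∈ m
  · have := P.meet_apex hk hbk hm hbm hmc hl hbl hlc
    exact ⟨this.choose, this.choose_spec.2, this.choose_spec.1⟩
  obtain ⟨u, hu, v, hv, huv⟩ := P.two_points l hl
  obtain ⟨xl, hxll, hxlk⟩ := P.cone_line_meets hk hbk hl hbl huv hu hv (hlc hu) (hlc hv)
  obtain ⟨u', hu', v', hv', huv'⟩ := P.two_points m hm
  obtain ⟨xm, hxmm, hxmk⟩ := P.cone_line_meets hk hbk hm hbm huv' hu' hv' (hmc hu') (hmc hv')
  rcases eq_or_ne xl xm with rfl | hxx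
  · exact ⟨xl, hxll, hxmm⟩
  by_cases hlk : l = k
  · exact ⟨xm, hlk ▸ hxmk, hxmm⟩
  by_cases hmk : m = k
  · exact ⟨xl, hxll, hmk ▸ hxlk⟩
  have hbxm : b ≠ xm := fun h => hbk (h ▸ hxmk)
  obtain ⟨n, hn, hbn, hxmn⟩ := P.join b xm hbxm
  have hln : l ≠ n := fun h => hbl (h ▸ hbn)
  obtain ⟨yl, hyll, hylk, hyln⟩ : ∃ y, y ∈ l ∧ y ∉ k ∧ y ∉ n := by
    by_contra h
    push_neg at h
    have hsub : l ⊆ (l ∩ k) ∪ (l ∩ n) := by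
      intro y hy
      by_cases hyk : y ∈ k
      · exact Or.inl ⟨hy, hyk⟩
      · exact Or.inr ⟨hy, h y hy hyk⟩
    have h1 : (l ∩ k).encard ≤ 1 :=
      Set.encard_le_one_iff.mpr fun a c ha hc => P.unique_meet l hl k hk hlk ha hc
    have h2 : (l ∩ n).encard ≤ 1 :=
      Set.encard_le_one_iff.mpr fun a c ha hc => P.unique_meet l hl n hn hln ha hc
    have := (hbig l hl).trans (Set.encard_mono hsub)
    have := this.trans (Set.encard_union_le _ _)
    have := this.trans (add_le_add h1 h2)
    norm_num at this
  have hylb : yl ≠ b := fun h => hbl (h ▸ hyll)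
  obtain ⟨m₂, hm₂, hbm₂, hylm₂, x₂, hx₂m₂, hx₂k⟩ := (hlc hyll).resolve_left hylb
  have hm₂c : m₂ ⊆ P.Cone b k := fun w hw => Or.inr ⟨m₂, hm₂, hbm₂, hw, ⟨x₂, hx₂m₂, hx₂k⟩⟩
  obtain ⟨z, hzm₂, hzm⟩ := P.meet_apex hk hbk hm₂ hbm₂ hm₂c hm hbm hmc
  have hzk : z ∉ k := by
    intro hzk
    have : z = xm := P.unique_meet m hm k hk hmk ⟨hzm, hzk⟩ ⟨hxmm, hxmk⟩
    subst this
    have : m₂ = n := P.line_eq hm₂ hn hbxm.symm hzm₂ hbm₂ hxmn hbn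
    exact hyln (this ▸ hylm₂)
  have hx₂xl : x₂ ≠ xl := by
    rintro rfl
    have : m₂ = l := P.line_eq hm₂ hl (fun h => hylk (by rw [h]; exact hx₂k)) hylm₂ hx₂m₂ hyll hxll
    exact hbl (this ▸ hbm₂)
  have hx₂xm : x₂ ≠ xm := by
    rintro rfl
    have : m₂ = n := P.line_eq hm₂ hn hbxm.symm hx₂m₂ hbm₂ hxmn hbn
    exact hyln (this ▸ hylm₂)
  exact P.veblen m₂ hm₂ k hk l hl m hm x₂ yl xl z xm
    (fun h => hbk (h ▸ hbm₂)) (fun h => hylk (h.symm ▸ hx₂k)) hx₂xl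
    (fun h => hzk (h.symm ▸ hx₂k)) hx₂xm
    hx₂m₂ hylm₂ hzm₂ hx₂k hxlk hxmk hyll hxll hzm hxmm

end ProjSpace

open ProjSpace in
/-- if `k₁, k₂, k₃` are the sides of a proper triangle on a proper plane
`Pl`, then through every point `a ∈ Pl` there is a proper line intersecting two of the
sides in two distinct proper points. -/
theorem triangle_spans_plane {S : Type*} (P : ProjSpace S) (W : Set S)
    (lam : ℕ) (hlam : 0 < lam) (hind : P.HasIndex W lam)
    (hsize : ∀ k ∈ P.L, 2 * (lam : ℕ∞) + 2 ≤ k.encard)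
    (Pl : Set S) (hPl : P.IsPlane Pl) (hPlprop : ¬ Pl ⊆ W)
    (k₁ k₂ k₃ : Set S) (htri : LineTriangle P k₁ k₂ k₃)
    (hsub₁ : k₁ ⊆ Pl) (hsub₂ : k₂ ⊆ Pl) (hsub₃ : k₃ ⊆ Pl)
    (hp₁ : ¬ k₁ ⊆ W) (hp₂ : ¬ k₂ ⊆ W) (hp₃ : ¬ k₃ ⊆ W)
    (hv₁₂ : ∀ x ∈ k₁ ∩ k₂, x ∉ W) (hv₁₃ : ∀ x ∈ k₁ ∩ k₃, x ∉ W)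
    (hv₂₃ : ∀ x ∈ k₂ ∩ k₃, x ∉ W) :
    ∀ a ∈ Pl, ∃ l ∈ P.L, ¬ l ⊆ W ∧ a ∈ l ∧
      ∃ p q : S, p ≠ q ∧ p ∉ W ∧ q ∉ W ∧ p ∈ l ∧ q ∈ l ∧
        ((p ∈ k₁ ∧ q ∈ k₂) ∨ (p ∈ k₁ ∧ q ∈ k₃) ∨ (p ∈ k₂ ∧ q ∈ k₃)) := by
  obtain ⟨hL₁, hL₂, hL₃, h12, h13, h23, ⟨v₁₂, hv12⟩, ⟨v₁₃, hv13⟩, ⟨v₂₃, hv23⟩, hconc⟩ := htri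
  have w12 : v₁₂ ∉ W := hv₁₂ _ hv12
  have w13 : v₁₃ ∉ W := hv₁₃ _ hv13
  have w23 : v₂₃ ∉ W := hv₂₃ _ hv23
  have d1 : v₁₂ ≠ v₁₃ := by rintro rfl; exact hconc ⟨v₁₂, ⟨hv12, hv13.2⟩⟩
  have d2 : v₁₂ ≠ v₂₃ := by rintro rfl; exact hconc ⟨v₁₂, ⟨hv12, hv23.2⟩⟩
  have d3 : v₁₃ ≠ v₂₃ := by rintro rfl; exact hconc ⟨v₁₃, ⟨⟨hv13.1, hv23.1⟩, hv13.2⟩⟩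
  intro a ha
  by_cases ha1 : a ∈ k₁
  · exact ⟨k₁, hL₁, hp₁, ha1, v₁₂, v₁₃, d1, w12, w13, hv12.1, hv13.1,
      Or.inr (Or.inl ⟨hv12.1, hv13.2⟩)⟩
  by_cases ha2 : a ∈ k₂
  · exact ⟨k₂, hL₂, hp₂, ha2, v₁₂, v₂₃, d2, w12, w23, hv12.2, hv23.1,
      Or.inr (Or.inl ⟨hv12.1, hv23.2⟩)⟩
  by_cases ha3 : a ∈ k₃
  · exact ⟨k₃, hL₃, hp₃, ha3, v₁₃, v₂₃, d3, w13, w23, hv13.2, hv23.2,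
      Or.inl ⟨hv13.1, hv23.1⟩⟩
  -- hard case: a not on any side
  obtain ⟨k₀, hk₀, b, hbk₀, hPlE⟩ := hPl
  subst hPlE
  have hbig : ∀ m ∈ P.L, (3 : ℕ∞) ≤ m.encard := by
    intro m hmL
    refine le_trans ?_ (hsize m hmL)
    have h1 : (1 : ℕ∞) ≤ (lam : ℕ∞) := by exact_mod_cast hlam
    calc (3 : ℕ∞) ≤ 2 * 1 + 2 := by norm_num
    _ ≤ 2 * (lam : ℕ∞) + 2 := add_le_add_left (mul_le_mul_right h1 2) 2
  have hsubPl : P.IsSubspace (P.span (insert b k₀)) := P.span_isSubspace _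
  have hPlCone : P.span (insert b k₀) ⊆ P.Cone b k₀ :=
    P.span_le (P.cone_isSubspace hk₀ hbk₀) (P.subset_cone hbk₀)
  set C : Set S := k₁ \ (W ∪ {v₁₂}) with hC
  have key : ∀ x, x ∈ C → ∃ l, l ∈ P.L ∧ a ∈ l ∧ x ∈ l ∧ ∃ q, q ∈ l ∧ q ∈ k₂ := by
    intro x hx
    have hxPl : x ∈ P.span (insert b k₀) := hsub₁ hx.1
    have hax : a ≠ x := fun h => ha1 (h ▸ hx.1)
    obtain ⟨l, hlL, hal, hxl⟩ := P.join a x hax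
    have hlPl : l ⊆ P.span (insert b k₀) := hsubPl l hlL a hal x hxl hax ha hxPl
    obtain ⟨q, hql, hqk₂⟩ := P.cone_lines_meet hk₀ hbk₀ hbig hlL hL₂
      (hlPl.trans hPlCone) (hsub₂.trans hPlCone)
    exact ⟨l, hlL, hal, hxl, q, hql, hqk₂⟩
  choose lf hf1 hf2 hf3 qf hq1 hq2 using key
  by_cases hgood : ∃ x, ∃ hx : x ∈ C, qf x hx ∉ W
  · obtain ⟨x, hx, hqW⟩ := hgood
    have hxW : x ∉ W := fun h => hx.2 (Or.inl h)
    have hxv : x ≠ v₁₂ := fun h => hx.2 (Or.inr h)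
    have hxq : x ≠ qf x hx := by
      intro h
      exact hxv (P.unique_meet k₁ hL₁ k₂ hL₂ h12 ⟨hx.1, h ▸ hq2 x hx⟩ ⟨hv12.1, hv12.2⟩)
    exact ⟨lf x hx, hf1 x hx, fun h => hxW (h (hf3 x hx)), hf2 x hx,
      x, qf x hx, hxq, hxW, hqW, hf3 x hx, hq1 x hx, Or.inl ⟨hx.1, hq2 x hx⟩⟩
  · exfalso
    push_neg at hgood
    classical
    set f : S → S := fun x => if h : x ∈ C then qf x h else x with hf
    have hmaps : Set.MapsTo f C (k₂ ∩ W) := by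
      intro x hx
      simp only [hf, dif_pos hx]
      exact ⟨hq2 x hx, hgood x hx⟩
    have hinj : Set.InjOn f C := by
      intro x hx y hy hxy
      simp only [hf, dif_pos hx, dif_pos hy] at hxy
      have hll : lf x hx = lf y hy := by
        by_contra hne
        have hq : qf x hx = a :=
          P.unique_meet _ (hf1 x hx) _ (hf1 y hy) hne
            ⟨hq1 x hx, hxy ▸ hq1 y hy⟩ ⟨hf2 x hx, hf2 y hy⟩
        exact ha2 (hq ▸ hq2 x hx)
      have hlk₁ : lf x hx ≠ k₁ := fun h => ha1 (h ▸ hf2 x hx)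
      exact P.unique_meet _ (hf1 x hx) _ hL₁ hlk₁
        ⟨hf3 x hx, hx.1⟩ ⟨hll ▸ hf3 y hy, hy.1⟩
    have hCcard : C.encard ≤ (lam : ℕ∞) :=
      (Set.encard_le_encard_of_injOn hmaps hinj).trans (hind.2 k₂ hL₂ hp₂)
    have hcover : k₁ ⊆ C ∪ ((k₁ ∩ W) ∪ {v₁₂}) := by
      intro y hy
      by_cases hyW : y ∈ W
      · exact Or.inr (Or.inl ⟨hy, hyW⟩)
      by_cases hyv : y = v₁₂
      · exact Or.inr (Or.inr hyv)
      · exact Or.inl ⟨hy, fun h => h.elim hyW hyv⟩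
    have hfin : (2 * (lam : ℕ∞) + 2) ≤ (lam : ℕ∞) + ((lam : ℕ∞) + 1) := by
      calc (2 * (lam : ℕ∞) + 2) ≤ k₁.encard := hsize k₁ hL₁
      _ ≤ (C ∪ ((k₁ ∩ W) ∪ {v₁₂})).encard := Set.encard_mono hcover
      _ ≤ C.encard + ((k₁ ∩ W) ∪ {v₁₂}).encard := Set.encard_union_le _ _
      _ ≤ C.encard + ((k₁ ∩ W).encard + ({v₁₂} : Set S).encard) :=
          add_le_add_right (Set.encard_union_le _ _) _
      _ ≤ (lam : ℕ∞) + ((lam : ℕ∞) + 1) := by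
          refine add_le_add hCcard (add_le_add (hind.2 k₁ hL₁ hp₁) ?_)
          simp [Set.encard_singleton]
    have : 2 * lam + 2 ≤ lam + (lam + 1) := by exact_mod_cast hfin
    omega
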